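/- For every real p ≥ 2 and all x, y ∈ ℝ^d, one has |x + y|^p ≤ |x|^p + p·|x|^{p-2}·⟨x, y⟩ + C(p)·(|x|^{p-2}·|y|² + |y|^p), where C(p) := p(p−1)·2^{p-3}. -/

import Mathlib

open scoped RealInnerProductSpace
open Real

section aux

variable {E : Type*} [NormedAddCommGroup E] [InnerProductSpace ℝ E]

lemma aux_scalar {q a b : ℝ} (hq : 0 ≤ q) (hb : 0 ≤ b) (hba : b ≤ a) :
    (a ^ q - b ^ q) * b ≤ q * a ^ q * (a - b) := by
  rcases eq_or_lt_of_le (hb.trans hba) with h | ha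
  · have hb0 : b = 0 := le_antisymm (hba.trans h.ge) hb
    simp [hb0, ← h]
  · set t : ℝ := b / a with ht_def
    have ht : 0 ≤ t := div_nonneg hb ha.le
    have hb' : b = a * t := by rw [ht_def]; field_simp
    have hbern : 1 + (q + 1) * (t - 1) ≤ (1 + (t - 1)) ^ (q + 1) :=
      one_add_mul_self_le_rpow_one_add (by linarith) (by linarith)
    have hpow : (1 + (t - 1)) ^ (q + 1) = t ^ q * t := by
      rw [show 1 + (t - 1) = t by ring, Real.rpow_add' ht (by linarith), Real.rpow_one]
    have h1 : (1 - t ^ q) * t ≤ q * (1 - t) := by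
      rw [hpow] at hbern; nlinarith
    have hbq : b ^ q = a ^ q * t ^ q := by rw [hb', Real.mul_rpow ha.le ht]
    calc (a ^ q - b ^ q) * b = (a ^ q * a) * ((1 - t ^ q) * t) := by rw [hbq, hb']; ring
      _ ≤ (a ^ q * a) * (q * (1 - t)) := by
          apply mul_le_mul_of_nonneg_left h1 (by positivity)
      _ = q * a ^ q * (a - b) := by rw [hb']; ring

lemma aux_lip {q : ℝ} (hq : 0 ≤ q) (u v : E) (h : ‖v‖ ≤ ‖u‖) :
    ‖(‖u‖ ^ q) • u - (‖v‖ ^ q) • v‖ ≤ (q + 1) * ‖u‖ ^ q * ‖u - v‖ := by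
  have key : (‖u‖ ^ q) • u - (‖v‖ ^ q) • v
      = (‖u‖ ^ q) • (u - v) + (‖u‖ ^ q - ‖v‖ ^ q) • v := by
    rw [smul_sub, sub_smul]; abel
  have hq1 : ‖v‖ ^ q ≤ ‖u‖ ^ q := Real.rpow_le_rpow (norm_nonneg v) h hq
  have h2 : (‖u‖ ^ q - ‖v‖ ^ q) * ‖v‖ ≤ q * ‖u‖ ^ q * (‖u‖ - ‖v‖) :=
    aux_scalar hq (norm_nonneg v) h
  have h3 : ‖u‖ - ‖v‖ ≤ ‖u - v‖ := norm_sub_norm_le u v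
  have h4 : (0:ℝ) ≤ q * ‖u‖ ^ q := by positivity
  calc ‖(‖u‖ ^ q) • u - (‖v‖ ^ q) • v‖
      ≤ ‖(‖u‖ ^ q) • (u - v)‖ + ‖(‖u‖ ^ q - ‖v‖ ^ q) • v‖ := by rw [key]; exact norm_add_le _ _
    _ = ‖u‖ ^ q * ‖u - v‖ + (‖u‖ ^ q - ‖v‖ ^ q) * ‖v‖ := by
        rw [norm_smul, norm_smul, Real.norm_eq_abs, Real.norm_eq_abs,
          abs_of_nonneg (Real.rpow_nonneg (norm_nonneg u) q), abs_of_nonneg (by linarith)]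
    _ ≤ ‖u‖ ^ q * ‖u - v‖ + q * ‖u‖ ^ q * (‖u‖ - ‖v‖) := by linarith
    _ ≤ ‖u‖ ^ q * ‖u - v‖ + q * ‖u‖ ^ q * ‖u - v‖ := by nlinarith
    _ = (q + 1) * ‖u‖ ^ q * ‖u - v‖ := by ring

lemma aux_lip' {q : ℝ} (hq : 0 ≤ q) (u v : E) :
    ‖(‖u‖ ^ q) • u - (‖v‖ ^ q) • v‖ ≤ (q + 1) * (max ‖u‖ ‖v‖) ^ q * ‖u - v‖ := by
  rcases le_total ‖v‖ ‖u‖ with h | h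
  · rw [max_eq_left h]; exact aux_lip hq u v h
  · rw [max_eq_right h]
    calc ‖(‖u‖ ^ q) • u - (‖v‖ ^ q) • v‖
        = ‖(‖v‖ ^ q) • v - (‖u‖ ^ q) • u‖ := norm_sub_rev _ _
      _ ≤ (q + 1) * ‖v‖ ^ q * ‖v - u‖ := aux_lip hq v u h
      _ = (q + 1) * ‖v‖ ^ q * ‖u - v‖ := by rw [norm_sub_rev]

lemma aux_deriv {p : ℝ} (hp : 1 < p) (x y : E) (t : ℝ) :
    HasDerivAt (fun s : ℝ => ‖x + s • y‖ ^ p)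
      (p * ‖x + t • y‖ ^ (p - 2) * ⟪x + t • y, y⟫) t := by
  have hg : HasDerivAt (fun s : ℝ => x + s • y) y t := by
    simpa using ((hasDerivAt_id t).smul_const y).const_add x
  have := (hasFDerivAt_norm_rpow (x + t • y) hp).comp_hasDerivAt t hg
  refine this.congr_deriv ?_
  simp only [ContinuousLinearMap.smul_apply, innerSL_apply_apply, smul_eq_mul]

end aux

set_option maxHeartbeats 1000000 in
theorem stmt_9 (d : ℕ) (hd : 1 ≤ d) (p : ℝ) (hp : 2 ≤ p)
    (x y : EuclideanSpace ℝ (Fin d)) :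
    ‖x + y‖ ^ p ≤
      ‖x‖ ^ p + p * ‖x‖ ^ (p - 2) * ⟪x, y⟫ +
        p * (p - 1) * (2:ℝ) ^ (p - 3) *
          (‖x‖ ^ (p - 2) * ‖y‖ ^ (2:ℝ) + ‖y‖ ^ p) := by
  have hp1 : (1:ℝ) < p := by linarith
  have hq : (0:ℝ) ≤ p - 2 := by linarith
  set f' : ℝ → ℝ := fun t => p * ‖x + t • y‖ ^ (p - 2) * ⟪x + t • y, y⟫ with hf'_def
  set K : ℝ := p * (p - 1) * (‖x‖ + ‖y‖) ^ (p - 2) * (‖y‖ * ‖y‖) with hK_def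
  -- continuity of f'
  have hcont : Continuous f' := by
    apply Continuous.mul
    · apply continuous_const.mul
      apply Continuous.rpow_const
      · exact continuous_norm.comp (continuous_const.add (continuous_id.smul continuous_const))
      · exact fun t => Or.inr hq
    · exact Continuous.inner (continuous_const.add (continuous_id.smul continuous_const))
        continuous_const
  -- FTC
  have hFTC : ∫ t in (0:ℝ)..1, f' t
      = ‖x + (1:ℝ) • y‖ ^ p - ‖x + (0:ℝ) • y‖ ^ p :=
    intervalIntegral.integral_eq_sub_of_hasDerivAt
      (f := fun s : ℝ => ‖x + s • y‖ ^ p) (f' := f') (a := 0) (b := 1)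
      (fun t _ => aux_deriv hp1 x y t) (hcont.intervalIntegrable 0 1)
  -- pointwise bound on f'
  have hbd : ∀ t ∈ Set.Icc (0:ℝ) 1, f' t ≤ f' 0 + K * t := by
    intro t ht
    obtain ⟨ht0, ht1⟩ := ht
    have hdiff : f' t - f' 0
        = p * ⟪(‖x + t • y‖ ^ (p - 2)) • (x + t • y) - (‖x‖ ^ (p - 2)) • x, y⟫ := by
      rw [inner_sub_left, real_inner_smul_left, real_inner_smul_left]
      simp only [hf'_def, zero_smul, add_zero]
      ring
    have hmax : max ‖x + t • y‖ ‖x‖ ≤ ‖x‖ + ‖y‖ := by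
      apply max_le
      · calc ‖x + t • y‖ ≤ ‖x‖ + ‖t • y‖ := norm_add_le x (t • y)
          _ = ‖x‖ + t * ‖y‖ := by rw [norm_smul, Real.norm_eq_abs, abs_of_nonneg ht0]
          _ ≤ ‖x‖ + ‖y‖ := by nlinarith [norm_nonneg y]
      · linarith [norm_nonneg y]
    have huv : ‖(x + t • y) - x‖ = t * ‖y‖ := by
      rw [add_sub_cancel_left, norm_smul, Real.norm_eq_abs, abs_of_nonneg ht0]
    have hmaxpow : (max ‖x + t • y‖ ‖x‖) ^ (p - 2) ≤ (‖x‖ + ‖y‖) ^ (p - 2) :=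
      Real.rpow_le_rpow (le_trans (norm_nonneg _) (le_max_left _ _)) hmax hq
    have hlip : ‖(‖x + t • y‖ ^ (p - 2)) • (x + t • y) - (‖x‖ ^ (p - 2)) • x‖
        ≤ (p - 1) * (‖x‖ + ‖y‖) ^ (p - 2) * (t * ‖y‖) := by
      calc ‖(‖x + t • y‖ ^ (p - 2)) • (x + t • y) - (‖x‖ ^ (p - 2)) • x‖
          ≤ ((p - 2) + 1) * (max ‖x + t • y‖ ‖x‖) ^ (p - 2) * ‖(x + t • y) - x‖ :=
            aux_lip' hq _ x
        _ ≤ ((p - 2) + 1) * (‖x‖ + ‖y‖) ^ (p - 2) * (t * ‖y‖) := by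
            rw [huv]
            apply mul_le_mul_of_nonneg_right
              (mul_le_mul_of_nonneg_left hmaxpow (by linarith)) (by positivity)
        _ = (p - 1) * (‖x‖ + ‖y‖) ^ (p - 2) * (t * ‖y‖) := by ring
    have hinner : ⟪(‖x + t • y‖ ^ (p - 2)) • (x + t • y) - (‖x‖ ^ (p - 2)) • x, y⟫
        ≤ (p - 1) * (‖x‖ + ‖y‖) ^ (p - 2) * (t * ‖y‖) * ‖y‖ :=
      le_trans (real_inner_le_norm _ _) (mul_le_mul_of_nonneg_right hlip (norm_nonneg y))
    have hf't : f' t - f' 0 ≤ K * t := by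
      rw [hdiff, hK_def]
      calc p * ⟪(‖x + t • y‖ ^ (p - 2)) • (x + t • y) - (‖x‖ ^ (p - 2)) • x, y⟫
          ≤ p * ((p - 1) * (‖x‖ + ‖y‖) ^ (p - 2) * (t * ‖y‖) * ‖y‖) :=
            mul_le_mul_of_nonneg_left hinner (by linarith)
        _ = p * (p - 1) * (‖x‖ + ‖y‖) ^ (p - 2) * (‖y‖ * ‖y‖) * t := by ring
    linarith
  -- integrate the bound
  have hint2 : ∫ t in (0:ℝ)..1, (f' 0 + K * t) = f' 0 + K * (1 / 2) := by
    have hKint : ∫ t in (0:ℝ)..1, K * t = K * (1 / 2) := by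
      rw [intervalIntegral.integral_const_mul, integral_id]
      norm_num
    rw [intervalIntegral.integral_add intervalIntegrable_const
      ((by fun_prop : Continuous fun t : ℝ => K * t).intervalIntegrable 0 1),
      hKint, intervalIntegral.integral_const]
    norm_num
  have hmono : ∫ t in (0:ℝ)..1, f' t ≤ f' 0 + K * (1 / 2) := by
    rw [← hint2]
    exact intervalIntegral.integral_mono_on (by norm_num)
      (hcont.intervalIntegrable 0 1)
      ((by fun_prop : Continuous fun t : ℝ => f' 0 + K * t).intervalIntegrable 0 1)
      hbd
  have hmain : ‖x + y‖ ^ p ≤ ‖x‖ ^ p + f' 0 + K * (1 / 2) := by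
    have h1 : x + (1:ℝ) • y = x + y := by rw [one_smul]
    have h0 : x + (0:ℝ) • y = x := by simp
    rw [h1, h0] at hFTC
    linarith [hmono, hFTC]
  have hf'0 : f' 0 = p * ‖x‖ ^ (p - 2) * ⟪x, y⟫ := by
    simp only [hf'_def, zero_smul, add_zero]
  -- final constant manipulation
  have hfinal : K * (1 / 2) ≤
      p * (p - 1) * (2:ℝ) ^ (p - 3) * (‖x‖ ^ (p - 2) * ‖y‖ ^ (2:ℝ) + ‖y‖ ^ p) := by
    have hab : ‖x‖ + ‖y‖ ≤ 2 * max ‖x‖ ‖y‖ := by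
      rcases le_total ‖x‖ ‖y‖ with h | h
      · rw [max_eq_right h]; linarith
      · rw [max_eq_left h]; linarith
    have hmax0 : (0:ℝ) ≤ max ‖x‖ ‖y‖ := le_trans (norm_nonneg x) (le_max_left _ _)
    have h1 : (‖x‖ + ‖y‖) ^ (p - 2) ≤ 2 ^ (p - 2) * (max ‖x‖ ‖y‖) ^ (p - 2) := by
      rw [← Real.mul_rpow (by norm_num) hmax0]
      exact Real.rpow_le_rpow (by positivity) hab hq
    have h2 : (max ‖x‖ ‖y‖) ^ (p - 2) ≤ ‖x‖ ^ (p - 2) + ‖y‖ ^ (p - 2) := by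
      rcases le_total ‖x‖ ‖y‖ with h | h
      · rw [max_eq_right h]
        nlinarith [Real.rpow_nonneg (norm_nonneg x) (p - 2)]
      · rw [max_eq_left h]
        nlinarith [Real.rpow_nonneg (norm_nonneg y) (p - 2)]
    have h3 : (‖x‖ + ‖y‖) ^ (p - 2) ≤ 2 ^ (p - 2) * (‖x‖ ^ (p - 2) + ‖y‖ ^ (p - 2)) :=
      le_trans h1 (mul_le_mul_of_nonneg_left h2 (Real.rpow_nonneg (by norm_num) _))
    have h4 : (2:ℝ) ^ (p - 2) = 2 * 2 ^ (p - 3) := by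
      rw [show p - 2 = (p - 3) + 1 by ring, Real.rpow_add_one (by norm_num : (2:ℝ) ≠ 0)]
      ring
    have h5 : ‖y‖ ^ (2:ℝ) = ‖y‖ * ‖y‖ := by
      rw [show (2:ℝ) = ((2:ℕ):ℝ) by norm_num, Real.rpow_natCast]
      ring
    have h6 : ‖y‖ ^ (p - 2) * (‖y‖ * ‖y‖) = ‖y‖ ^ p := by
      rw [← h5, ← Real.rpow_add' (norm_nonneg y) (by linarith : p - 2 + 2 ≠ 0)]
      norm_num
    calc K * (1 / 2) = (‖x‖ + ‖y‖) ^ (p - 2) * (p * (p - 1) * (‖y‖ * ‖y‖) * (1 / 2)) := by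
          rw [hK_def]; ring
      _ ≤ 2 ^ (p - 2) * (‖x‖ ^ (p - 2) + ‖y‖ ^ (p - 2))
            * (p * (p - 1) * (‖y‖ * ‖y‖) * (1 / 2)) := by
          apply mul_le_mul_of_nonneg_right h3
          have hy2 : (0:ℝ) ≤ ‖y‖ * ‖y‖ := mul_self_nonneg _
          have hpp : (0:ℝ) ≤ p * (p - 1) := by nlinarith
          nlinarith [hy2, hpp]
      _ = p * (p - 1) * (2:ℝ) ^ (p - 3)
            * (‖x‖ ^ (p - 2) * (‖y‖ * ‖y‖) + ‖y‖ ^ (p - 2) * (‖y‖ * ‖y‖)) := by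
          rw [h4]; ring
      _ = p * (p - 1) * (2:ℝ) ^ (p - 3) * (‖x‖ ^ (p - 2) * ‖y‖ ^ (2:ℝ) + ‖y‖ ^ p) := by
          rw [h5, h6]
  calc ‖x + y‖ ^ p ≤ ‖x‖ ^ p + f' 0 + K * (1 / 2) := hmain
    _ ≤ ‖x‖ ^ p + p * ‖x‖ ^ (p - 2) * ⟪x, y⟫ +
        p * (p - 1) * (2:ℝ) ^ (p - 3) * (‖x‖ ^ (p - 2) * ‖y‖ ^ (2:ℝ) + ‖y‖ ^ p) := by
      rw [hf'0]
      linarith [hfinal]
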